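/- The Kowalevski–Yehia integral K = (ω₁²−ω₂²+α₁)² + (2ω₁ω₂+α₂)² + 2λ[(ω₃−λ)(ω₁²+ω₂²)+2ω₁α₃] is a first integral of the vector field X: for every point of ℝ⁶, the directional derivative of K along X vanishes, i.e. ⟨∇K, X⟩ = 0 identically. -/

import Mathlib

/-- The Kowalevski–Yehia gyrostat vector field on ℝ⁶ = {(ω₁,ω₂,ω₃,α₁,α₂,α₃)}. -/
noncomputable def KY (lam : ℝ) (v : Fin 6 → ℝ) : Fin 6 → ℝ :=
  ![ (1/2) * v 1 * (v 2 - lam),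
     (1/2) * (-(v 0) * (v 2 - lam) - v 5),
     v 4,
     v 4 * v 2 - v 5 * v 1,
     v 5 * v 0 - v 3 * v 2,
     v 3 * v 1 - v 4 * v 0 ]

/-- The Kowalevski–Yehia integral K. -/
noncomputable def KYK (lam : ℝ) (v : Fin 6 → ℝ) : ℝ :=
  ((v 0)^2 - (v 1)^2 + v 3)^2 + (2*(v 0)*(v 1) + v 4)^2
    + 2*lam*((v 2 - lam)*((v 0)^2 + (v 1)^2) + 2*(v 0)*(v 5))

/-- K is a first integral of the Kowalevski–Yehia field:
its directional derivative along X vanishes identically. -/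
theorem KYK_first_integral (lam : ℝ) :
    ∀ v : Fin 6 → ℝ, fderiv ℝ (KYK lam) v (KY lam v) = 0 := by
  intro v
  have h0 := hasFDerivAt_apply (𝕜 := ℝ) (0 : Fin 6) v
  have h1 := hasFDerivAt_apply (𝕜 := ℝ) (1 : Fin 6) v
  have h2 := hasFDerivAt_apply (𝕜 := ℝ) (2 : Fin 6) v
  have h3 := hasFDerivAt_apply (𝕜 := ℝ) (3 : Fin 6) v
  have h4 := hasFDerivAt_apply (𝕜 := ℝ) (4 : Fin 6) v
  have h5 := hasFDerivAt_apply (𝕜 := ℝ) (5 : Fin 6) v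
  have hA := ((h0.mul h0).sub (h1.mul h1)).add h3
  have hB := ((h0.const_mul 2).mul h1).add h4
  have hC := ((h2.sub_const lam).mul ((h0.mul h0).add (h1.mul h1))).add
      ((h0.const_mul 2).mul h5)
  have hK := ((hA.mul hA).add (hB.mul hB)).add (hC.const_mul (2*lam))
  have hfun : KYK lam = fun v : Fin 6 → ℝ =>
      ((v 0 * v 0 - v 1 * v 1 + v 3) * (v 0 * v 0 - v 1 * v 1 + v 3)
        + (2 * v 0 * v 1 + v 4) * (2 * v 0 * v 1 + v 4))
        + 2 * lam * ((v 2 - lam) * (v 0 * v 0 + v 1 * v 1) + 2 * v 0 * v 5) := by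
    funext w
    simp only [KYK]
    ring
  have k0 : KY lam v 0 = (1/2) * v 1 * (v 2 - lam) := rfl
  have k1 : KY lam v 1 = (1/2) * (-(v 0) * (v 2 - lam) - v 5) := rfl
  have k2 : KY lam v 2 = v 4 := rfl
  have k3 : KY lam v 3 = v 4 * v 2 - v 5 * v 1 := rfl
  have k4 : KY lam v 4 = v 5 * v 0 - v 3 * v 2 := rfl
  have k5 : KY lam v 5 = v 3 * v 1 - v 4 * v 0 := rfl
  rw [hfun, (show HasFDerivAt (fun v : Fin 6 → ℝ =>
      ((v 0 * v 0 - v 1 * v 1 + v 3) * (v 0 * v 0 - v 1 * v 1 + v 3)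
        + (2 * v 0 * v 1 + v 4) * (2 * v 0 * v 1 + v 4))
        + 2 * lam * ((v 2 - lam) * (v 0 * v 0 + v 1 * v 1) + 2 * v 0 * v 5)) _ v from hK).fderiv]
  simp only [ContinuousLinearMap.add_apply, ContinuousLinearMap.smul_apply,
    Pi.mul_apply, Pi.sub_apply, Pi.add_apply,
    ContinuousLinearMap.sub_apply, ContinuousLinearMap.proj_apply,
    k0, k1, k2, k3, k4, k5, smul_eq_mul]
  ring
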